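/- For an integer n ≥ 2 and fixed distinct nonzero complex numbers p, q, r, define the bracket on coordinates x = w(p), y = w(q), z = w(r) by {x,y} = ((pⁿ x - qⁿ y)/(p-q))(x-y) and cyclically. Then generically the Jacobi identity {{x,y},z} + c.p. = 0 fails; i.e., there exist p, q, r, x, y, z for which the cyclic sum is nonzero. -/
import Mathlib


/-- For `n ≥ 2`, the bracket `{x,y} = ((pⁿx - qⁿy)/(p-q))(x-y)` (extended as a
biderivation) fails the Jacobi identity: there is an explicit counterexample with
distinct nonzero `p, q, r`. -/
theorem stmt_7 (n : ℕ) (hn : 2 ≤ n) :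
    ∃ p q r x y z : ℂ, p ≠ q ∧ q ≠ r ∧ r ≠ p ∧ p ≠ 0 ∧ q ≠ 0 ∧ r ≠ 0 ∧
      -- {{x,y},z} + {{y,z},x} + {{z,x},y} ≠ 0
      (((p ^ n * (x - y) + (p ^ n * x - q ^ n * y)) / (p - q))
          * (-((r ^ n * z - p ^ n * x) / (r - p) * (z - x)))
        + ((-(q ^ n * (x - y)) - (p ^ n * x - q ^ n * y)) / (p - q))
          * ((q ^ n * y - r ^ n * z) / (q - r) * (y - z)))
      + (((q ^ n * (y - z) + (q ^ n * y - r ^ n * z)) / (q - r))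
          * (-((p ^ n * x - q ^ n * y) / (p - q) * (x - y)))
        + ((-(r ^ n * (y - z)) - (q ^ n * y - r ^ n * z)) / (q - r))
          * ((r ^ n * z - p ^ n * x) / (r - p) * (z - x)))
      + (((r ^ n * (z - x) + (r ^ n * z - p ^ n * x)) / (r - p))
          * (-((q ^ n * y - r ^ n * z) / (q - r) * (y - z)))
        + ((-(p ^ n * (z - x)) - (r ^ n * z - p ^ n * x)) / (r - p))
          * ((p ^ n * x - q ^ n * y) / (p - q) * (x - y))) ≠ 0 := by
  refine ⟨1, 2, 4, 1, 1, 0, by norm_num, by norm_num, by norm_num, one_ne_zero,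
    by norm_num, by norm_num, ?_⟩
  set t : ℂ := (2 : ℂ) ^ n with ht
  have h4 : (4 : ℂ) ^ n = t ^ 2 := by
    rw [ht, show (4 : ℂ) = 2 ^ 2 by norm_num, ← pow_mul, mul_comm, pow_mul]
  have h1 : (1 : ℂ) ^ n = 1 := one_pow n
  rw [h4, h1]
  have key : ∀ s : ℂ,
      ((1 * ((1:ℂ) - 1) + (1 * 1 - s * 1)) / (1 - 2))
          * (-((s ^ 2 * 0 - 1 * 1) / (4 - 1) * (0 - 1)))
        + ((-(s * ((1:ℂ) - 1)) - (1 * 1 - s * 1)) / (1 - 2))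
          * ((s * 1 - s ^ 2 * 0) / (2 - 4) * (1 - 0))
      + (((s * ((1:ℂ) - 0) + (s * 1 - s ^ 2 * 0)) / (2 - 4))
          * (-((1 * 1 - s * 1) / (1 - 2) * (1 - 1)))
        + ((-(s ^ 2 * ((1:ℂ) - 0)) - (s * 1 - s ^ 2 * 0)) / (2 - 4))
          * ((s ^ 2 * 0 - 1 * 1) / (4 - 1) * (0 - 1)))
      + (((s ^ 2 * ((0:ℂ) - 1) + (s ^ 2 * 0 - 1 * 1)) / (4 - 1))
          * (-((s * 1 - s ^ 2 * 0) / (2 - 4) * (1 - 0)))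
        + ((-(1 * ((0:ℂ) - 1)) - (s ^ 2 * 0 - 1 * 1)) / (4 - 1))
          * ((1 * 1 - s * 1) / (1 - 2) * (1 - 1)))
      = -((s - 1) ^ 2 * (s - 2)) / 6 := by
    intro s; ring
  rw [key t]
  have htn : t = ((2 ^ n : ℕ) : ℂ) := by push_cast [ht]; ring
  have h2n : 4 ≤ 2 ^ n := by
    calc (4 : ℕ) = 2 ^ 2 := by norm_num
    _ ≤ 2 ^ n := Nat.pow_le_pow_right (by norm_num) hn
  have ht1 : t ≠ 1 := by
    rw [htn, show (1 : ℂ) = ((1 : ℕ) : ℂ) by norm_num, Ne, Nat.cast_inj]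
    omega
  have ht2 : t ≠ 2 := by
    rw [htn, show (2 : ℂ) = ((2 : ℕ) : ℂ) by norm_num, Ne, Nat.cast_inj]
    omega
  have : (t - 1) ^ 2 * (t - 2) ≠ 0 :=
    mul_ne_zero (pow_ne_zero _ (sub_ne_zero.mpr ht1)) (sub_ne_zero.mpr ht2)
  simp only [neg_div, ne_eq, neg_eq_zero, div_eq_zero_iff]
  push_neg
  exact ⟨this, by norm_num⟩
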